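/- Let w be a permutation of {1,…,n}. Then w satisfies: for every i ∈ {1,…,n−1}, either w(i) = 1 or w⁻¹(w(i) − 1) ≤ i + 1, if and only if w is a concatenation of decreasing consecutive blocks; precisely, if and only if there exist an integer m ≥ 0 and integers 0 = j₀ < j₁ < ⋯ < j_m < j_{m+1} = n such that for every q ∈ {0,…,m} and every s with j_q < s ≤ j_{q+1} one has w(s) = j_q + j_{q+1} + 1 − s. -/

import Mathlib

namespace PetersonAux

/-- The Peterson fixed-point condition. -/
def Cond {n : ℕ} (w : Equiv.Perm (Fin n)) : Prop :=
  ∀ i : Fin n, (i : ℕ) + 1 < n →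
    ((w i : ℕ) = 0 ∨
      ((w.symm ⟨(w i : ℕ) - 1, lt_of_le_of_lt (Nat.sub_le _ _) (w i).isLt⟩ : Fin n) : ℕ)
        ≤ (i : ℕ) + 1)

/-- `a` is a boundary: positions `< a` carry values `< a`. -/
def Bdry {n : ℕ} (w : Equiv.Perm (Fin n)) (a : ℕ) : Prop :=
  ∀ t : Fin n, (t : ℕ) < a → (w t : ℕ) < a

lemma ge_of_bdry {n : ℕ} {w : Equiv.Perm (Fin n)} {a : ℕ} (hb : Bdry w a)
    {t : Fin n} (ht : a ≤ (t : ℕ)) : a ≤ (w t : ℕ) := by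
  by_contra h
  push_neg at h
  set S : Finset (Fin n) := Finset.univ.filter (fun t => (t : ℕ) < a) with hS
  have hsub : Finset.image w S ⊆ S := by
    intro v hv
    simp only [Finset.mem_image, hS, Finset.mem_filter, Finset.mem_univ, true_and] at hv ⊢
    obtain ⟨t', ht', rfl⟩ := hv
    exact hb t' ht'
  have hcard : (Finset.image w S).card = S.card := Finset.card_image_of_injective _ w.injective
  have himg : Finset.image w S = S := Finset.eq_of_subset_of_card_le hsub (le_of_eq hcard.symm)
  have hmem : w t ∈ S := by
    simp only [hS, Finset.mem_filter, Finset.mem_univ, true_and]; exact h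
  rw [← himg] at hmem
  simp only [Finset.mem_image, hS, Finset.mem_filter, Finset.mem_univ, true_and] at hmem
  obtain ⟨t', ht', heq⟩ := hmem
  have := w.injective heq
  omega

lemma chain {n : ℕ} {w : Equiv.Perm (Fin n)} (H : Cond w) {a : ℕ} (hb : Bdry w a)
    (ha : a < n) :
    ∀ k : ℕ, a ≤ k → k ≤ (w ⟨a, ha⟩ : ℕ) → ∀ s : Fin n, (s : ℕ) = k →
      (w s : ℕ) = a + (w ⟨a, ha⟩ : ℕ) - k := by
  intro k
  induction k using Nat.strong_induction_on with
  | _ k IH =>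
    intro hak hkw s hsk
    rcases Nat.eq_or_lt_of_le hak with heq | hlt
    · have hs : s = ⟨a, ha⟩ := Fin.ext (by simp only [Fin.val_mk]; omega)
      rw [hs]; omega
    · obtain ⟨k', rfl⟩ : ∃ k', k = k' + 1 := ⟨k - 1, by omega⟩
      have hk'n : k' < n := by omega
      set s' : Fin n := ⟨k', hk'n⟩ with hs'
      have hs'v : (s' : ℕ) = k' := rfl
      have hIH : (w s' : ℕ) = a + (w ⟨a, ha⟩ : ℕ) - k' :=
        IH k' (by omega) (by omega) (by omega) s' rfl
      have hws'pos : 0 < (w s' : ℕ) := by omega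
      have hsn : (s' : ℕ) + 1 < n := by omega
      rcases H s' hsn with h0 | hle
      · omega
      · set p := w.symm ⟨(w s' : ℕ) - 1,
          lt_of_le_of_lt (Nat.sub_le _ _) (w s').isLt⟩ with hp
        have hwp : (w p : ℕ) = (w s' : ℕ) - 1 := by
          rw [hp, Equiv.apply_symm_apply]
        have hva : a ≤ (w p : ℕ) := by omega
        have hpa : a ≤ (p : ℕ) := by
          by_contra hc
          push_neg at hc
          have := hb p hc
          omega
        have hpout : ∀ e : ℕ, a ≤ e → e ≤ k' → (p : ℕ) ≠ e := by
          intro e hae hek' hpe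
          have := IH e (by omega) hae (by omega) p hpe
          omega
        have hpk : (p : ℕ) = k' + 1 := by
          by_contra hc
          have h2 : (p : ℕ) ≤ k' := by omega
          exact hpout (p : ℕ) hpa h2 rfl
        have hsp : s = p := Fin.ext (by omega)
        rw [hsp, hwp]
        omega

lemma bdry_next {n : ℕ} {w : Equiv.Perm (Fin n)} (H : Cond w) {a : ℕ} (hb : Bdry w a)
    (ha : a < n) : Bdry w ((w ⟨a, ha⟩ : ℕ) + 1) := by
  intro t ht
  have hwa : a ≤ (w ⟨a, ha⟩ : ℕ) := ge_of_bdry hb (le_refl a)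
  rcases lt_or_ge (t : ℕ) a with h | h
  · have := hb t h
    omega
  · have := chain H hb ha (t : ℕ) h (by omega) t rfl
    omega

/-- block starts -/
def bs {n : ℕ} (w : Equiv.Perm (Fin n)) : ℕ → ℕ
  | 0 => 0
  | k + 1 => if h : bs w k < n then (w ⟨bs w k, h⟩ : ℕ) + 1 else n

lemma bs_le {n : ℕ} (w : Equiv.Perm (Fin n)) : ∀ k, bs w k ≤ n := by
  intro k
  cases k with
  | zero => simp [bs]
  | succ k =>
    rw [bs]
    split
    · exact (w _).isLt
    · exact le_refl n

lemma bs_bdry {n : ℕ} {w : Equiv.Perm (Fin n)} (H : Cond w) : ∀ k, Bdry w (bs w k) := by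
  intro k
  induction k with
  | zero => intro t ht; simp [bs] at ht
  | succ k IH =>
    rw [bs]
    split
    next h => exact bdry_next H IH h
    next h => intro t _; exact (w t).isLt

lemma bs_lt_succ {n : ℕ} {w : Equiv.Perm (Fin n)} (H : Cond w) {k : ℕ} (h : bs w k < n) :
    bs w k < bs w (k + 1) := by
  have hwa : bs w k ≤ (w ⟨bs w k, h⟩ : ℕ) := ge_of_bdry (bs_bdry H k) (le_refl _)
  rw [bs]
  rw [dif_pos h]
  omega

lemma bs_stab {n : ℕ} (w : Equiv.Perm (Fin n)) {k : ℕ} (h : ¬ bs w k < n) :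
    bs w (k + 1) = n := by
  rw [bs, dif_neg h]

lemma bs_eventually {n : ℕ} {w : Equiv.Perm (Fin n)} (H : Cond w) : bs w n = n := by
  have key : ∀ k, min k n ≤ bs w k := by
    intro k
    induction k with
    | zero => simp
    | succ k IH =>
      rcases lt_or_ge (bs w k) n with h | h
      · have := bs_lt_succ H h
        omega
      · have := bs_stab w (k := k) (by omega)
        omega
  have := key n
  have := bs_le w n
  omega

lemma backward {n : ℕ} (w : Equiv.Perm (Fin n)) {m : ℕ} {j : Fin (m + 2) → ℕ}
    (hj0 : j 0 = 0) (hjl : j (Fin.last (m + 1)) = n) (hmono : StrictMono j)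
    (hblock : ∀ q : Fin (m + 1), ∀ s : Fin n, j q.castSucc ≤ (s : ℕ) → (s : ℕ) < j q.succ →
      (w s : ℕ) = j q.castSucc + j q.succ - 1 - (s : ℕ)) : Cond w := by
  intro i hi
  -- find the block containing i
  have hex : ∃ q : Fin (m + 1), j q.castSucc ≤ (i : ℕ) ∧ (i : ℕ) < j q.succ := by
    set S : Finset (Fin (m + 1)) := Finset.univ.filter (fun q => j q.castSucc ≤ (i : ℕ))
      with hSdef
    have hS0 : (0 : Fin (m + 1)) ∈ S := by
      simp only [hSdef, Finset.mem_filter, Finset.mem_univ, true_and, Fin.castSucc_zero, hj0]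
      exact Nat.zero_le _
    set q := S.max' ⟨0, hS0⟩ with hq
    have hqS : q ∈ S := S.max'_mem _
    have hq1 : j q.castSucc ≤ (i : ℕ) := by
      simpa only [hSdef, Finset.mem_filter, Finset.mem_univ, true_and] using hqS
    refine ⟨q, hq1, ?_⟩
    by_contra hc
    push_neg at hc
    have hqm : (q : ℕ) < m := by
      by_contra hqm
      have hql : q.succ = Fin.last (m + 1) := by
        apply Fin.ext
        simp only [Fin.val_succ, Fin.val_last]
        omega
      rw [hql, hjl] at hc
      omega
    set q' : Fin (m + 1) := ⟨(q : ℕ) + 1, by omega⟩ with hq'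
    have hq'c : q'.castSucc = q.succ := by
      apply Fin.ext
      simp [hq']
    have hq'S : q' ∈ S := by
      simp only [hSdef, Finset.mem_filter, Finset.mem_univ, true_and, hq'c]
      exact hc
    have := S.le_max' q' hq'S
    rw [← hq] at this
    have : (q' : ℕ) ≤ (q : ℕ) := this
    simp [hq'] at this
  obtain ⟨q, h1, h2⟩ := hex
  set A := j q.castSucc with hA
  set B := j q.succ with hB
  have hAB : A < B := hmono (Fin.castSucc_lt_succ : q.castSucc < q.succ)
  have hBn : B ≤ n := by
    rw [← hjl]
    exact hmono.monotone (Fin.le_last _)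
  have hwi : (w i : ℕ) = A + B - 1 - (i : ℕ) := hblock q i h1 h2
  by_cases hA0 : (w i : ℕ) = 0
  · exact Or.inl hA0
  right
  by_cases hib : (i : ℕ) + 1 < B
  · -- next position is in the same block
    set s1 : Fin n := ⟨(i : ℕ) + 1, by omega⟩ with hs1
    have hws1 : (w s1 : ℕ) = A + B - 1 - ((i : ℕ) + 1) :=
      hblock q s1 (by simp only [hs1, Fin.val_mk]; omega) (by simp only [hs1, Fin.val_mk]; omega)
    have key : w.symm ⟨(w i : ℕ) - 1, lt_of_le_of_lt (Nat.sub_le _ _) (w i).isLt⟩ = s1 := by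
      rw [Equiv.symm_apply_eq]
      apply Fin.ext
      simp only [Fin.val_mk]
      omega
    rw [key]
  · -- i is the last position of the block
    have hiB : (i : ℕ) + 1 = B := by omega
    have hwiA : (w i : ℕ) = A := by omega
    have hA1 : 1 ≤ A := by omega
    have hq0 : (q : ℕ) ≠ 0 := by
      intro h0
      have : q.castSucc = 0 := by apply Fin.ext; simp [h0]
      rw [this, hj0] at hA
      omega
    set q' : Fin (m + 1) := ⟨(q : ℕ) - 1, by omega⟩ with hq'
    have hq'succ : q'.succ = q.castSucc := by
      apply Fin.ext
      simp only [Fin.val_succ, Fin.coe_castSucc, hq', Fin.val_mk]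
      omega
    set A' := j q'.castSucc with hA'
    have hA'A : A' < A := by
      rw [hA', hA, ← hq'succ]
      exact hmono (Fin.castSucc_lt_succ : q'.castSucc < q'.succ)
    set s0 : Fin n := ⟨A', by omega⟩ with hs0
    have hws0 : (w s0 : ℕ) = A' + A - 1 - A' := by
      have := hblock q' s0 (by simp [hs0]; exact le_refl _) (by rw [hq'succ, ← hA]; simp [hs0]; omega)
      rw [hq'succ, ← hA] at this
      simpa [hs0] using this
    have key : w.symm ⟨(w i : ℕ) - 1, lt_of_le_of_lt (Nat.sub_le _ _) (w i).isLt⟩ = s0 := by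
      rw [Equiv.symm_apply_eq]
      apply Fin.ext
      simp only [Fin.val_mk]
      omega
    rw [key]
    simp only [hs0, Fin.val_mk]
    omega

end PetersonAux

open PetersonAux in
/-- Characterization of `S`-fixed points of the Peterson variety (0-indexed form of the
1-indexed statement).  A permutation `w` of `{0,…,n-1}` satisfies: for every `i` with
`i + 1 < n`, either `w i = 0` or `w⁻¹((w i) − 1) ≤ i + 1`, if and only if `w` is a
concatenation of decreasing consecutive blocks, i.e. there are `m ≥ 0` and
`0 = j₀ < j₁ < ⋯ < j_m < j_{m+1} = n` such that for each block `q` and each position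
`s` with `j_q ≤ s < j_{q+1}` one has `w s = j_q + j_{q+1} − 1 − s`. -/
theorem peterson_fixed_point_iff (n : ℕ) (hn : 1 ≤ n) (w : Equiv.Perm (Fin n)) :
    (∀ i : Fin n, (i : ℕ) + 1 < n →
        ((w i : ℕ) = 0 ∨
          ((w.symm ⟨(w i : ℕ) - 1, lt_of_le_of_lt (Nat.sub_le _ _) (w i).isLt⟩ : Fin n) : ℕ)
            ≤ (i : ℕ) + 1))
      ↔ ∃ m : ℕ, ∃ j : Fin (m + 2) → ℕ,
          j 0 = 0 ∧ j (Fin.last (m + 1)) = n ∧ StrictMono j ∧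
          ∀ q : Fin (m + 1), ∀ s : Fin n,
            j q.castSucc ≤ (s : ℕ) → (s : ℕ) < j q.succ →
              (w s : ℕ) = j q.castSucc + j q.succ - 1 - (s : ℕ) := by
  constructor
  · intro H
    have K_ex : ∃ k, bs w k = n := ⟨n, bs_eventually H⟩
    set K := Nat.find K_ex with hKdef
    have hK : bs w K = n := Nat.find_spec K_ex
    have hmin : ∀ k, k < K → bs w k ≠ n := fun k hk => Nat.find_min K_ex hk
    have hK1 : 1 ≤ K := by
      rcases Nat.eq_zero_or_pos K with h0 | h
      · exfalso
        rw [h0] at hK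
        simp only [bs] at hK
        omega
      · exact h
    have hlt : ∀ k, k < K → bs w k < n :=
      fun k hk => lt_of_le_of_ne (bs_le w k) (hmin k hk)
    have hmono2 : ∀ k', k' ≤ K → ∀ k, k < k' → bs w k < bs w k' := by
      intro k'
      induction k' with
      | zero => intro _ k hk; omega
      | succ k' IH =>
        intro hk'K k hk
        have h1 : bs w k' < bs w (k' + 1) := bs_lt_succ H (hlt k' (by omega))
        rcases Nat.lt_succ_iff_lt_or_eq.mp hk with h | h
        · exact lt_trans (IH (by omega) k h) h1
        · rw [h]; exact h1
    refine ⟨K - 1, fun i => bs w (i : ℕ), ?_, ?_, ?_, ?_⟩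
    · simp [bs]
    · have hKl : K - 1 + 1 = K := by omega
      simp only [Fin.val_last, hKl, hK]
    · intro i1 i2 h12
      exact hmono2 (i2 : ℕ) (by omega) (i1 : ℕ) h12
    · intro q s hq1 hq2
      simp only [Fin.coe_castSucc, Fin.val_succ] at hq1 hq2 ⊢
      have hqK : (q : ℕ) < K := by
        have := q.isLt
        omega
      have ha : bs w (q : ℕ) < n := hlt _ hqK
      have hnext : bs w ((q : ℕ) + 1) = (w ⟨bs w (q : ℕ), ha⟩ : ℕ) + 1 := by
        rw [bs, dif_pos ha]
      have := chain H (bs_bdry H (q : ℕ)) ha (s : ℕ) hq1 (by omega) s rfl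
      omega
  · rintro ⟨m, j, hj0, hjl, hmono, hblock⟩
    exact backward w hj0 hjl hmono hblock
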